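/- arXiv:1911.11636 — 2 statements merged into one kernel-verified Lean document; each statement's English description precedes it below -/
import Mathlib

section
/- Conversely, let T be a linear map from functions m̃ : ZMod N_θ × Fin N_ρ → ℝ to functions d : ZMod N_θ × Fin N_h → ℝ that commutes with angular rotations (i.e., T(m̃(· - φ, ·))(s, h) = (T m̃)(s - φ, h) for all φ ∈ ZMod N_θ). Then there exists κ : Fin N_h × Fin N_ρ × ZMod N_θ → ℝ such that (T m̃)(s, h) = Σ_ρ Σ_θ κ(h, ρ, s - θ) · m̃(θ, ρ). -/
theorem rotation_equivariant_is_convolution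
    (Nθ Nρ Nh : ℕ) [NeZero Nθ]
    (T : (ZMod Nθ × Fin Nρ → ℝ) →ₗ[ℝ] (ZMod Nθ × Fin Nh → ℝ))
    (hT : ∀ (φ : ZMod Nθ) (mtil : ZMod Nθ × Fin Nρ → ℝ) (s : ZMod Nθ) (h : Fin Nh),
      T (fun p => mtil (p.1 - φ, p.2)) (s, h) = T mtil (s - φ, h)) :
    ∃ κ : Fin Nh × Fin Nρ × ZMod Nθ → ℝ,
      ∀ (mtil : ZMod Nθ × Fin Nρ → ℝ) (s : ZMod Nθ) (h : Fin Nh),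
        T mtil (s, h) = ∑ ρ : Fin Nρ, ∑ θ : ZMod Nθ, κ (h, ρ, s - θ) * mtil (θ, ρ) := by
  classical
  set δ : (ZMod Nθ × Fin Nρ) → (ZMod Nθ × Fin Nρ → ℝ) :=
    fun p q => if q = p then 1 else 0 with hδ
  refine ⟨fun x => T (δ (0, x.2.1)) (x.2.2, x.1), ?_⟩
  intro mtil s h
  have hdecomp : mtil = ∑ p : ZMod Nθ × Fin Nρ, mtil p • δ p := by
    funext q
    simp [hδ, Finset.sum_apply]
  have hshift : ∀ (θ : ZMod Nθ) (ρ : Fin Nρ),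
      T (δ (θ, ρ)) (s, h) = T (δ (0, ρ)) (s - θ, h) := by
    intro θ ρ
    have : δ (θ, ρ) = fun p : ZMod Nθ × Fin Nρ => δ (0, ρ) (p.1 - θ, p.2) := by
      funext q
      simp only [hδ, Prod.ext_iff, sub_eq_zero]
    rw [this, hT]
  calc T mtil (s, h) = ∑ p : ZMod Nθ × Fin Nρ, mtil p * T (δ p) (s, h) := by
        conv_lhs => rw [hdecomp]
        simp [Finset.sum_apply, smul_eq_mul]
    _ = ∑ ρ : Fin Nρ, ∑ θ : ZMod Nθ, T (δ (0, ρ)) (s - θ, h) * mtil (θ, ρ) := by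
        rw [Fintype.sum_prod_type, Finset.sum_comm]
        refine Finset.sum_congr rfl fun ρ _ => Finset.sum_congr rfl fun θ _ => ?_
        rw [hshift θ ρ, mul_comm]
    _ = _ := rfl
end

section
/- Let w, N_cnn, N_θ be positive integers and consider a composition of N_cnn cyclic convolution layers on ZMod N_θ, each with kernel support contained in {0, 1, ..., w-1} (as a subset of ZMod N_θ, with w < N_θ). Then the output at index s of the composed map depends only on input values at indices s - j for 0 ≤ j ≤ N_cnn·(w-1). In particular, if N_cnn·(w-1) < N_θ - 1, there exist indices s, θ such that the output at s is independent of the input at θ. -/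
/-- Composition of `n` cyclic convolution layers with kernels `k 0, …, k (n-1)`. -/
def convLayers (Nθ : ℕ) [NeZero Nθ] (k : ℕ → ZMod Nθ → ℝ) :
    ℕ → (ZMod Nθ → ℝ) → ZMod Nθ → ℝ
  | 0, f => f
  | n + 1, f => fun s => ∑ θ : ZMod Nθ, k n (s - θ) * convLayers Nθ k n f θ

lemma convLayers_receptive
    (w Nθ : ℕ) [NeZero Nθ] (k : ℕ → ZMod Nθ → ℝ)
    (hsupp : ∀ (i : ℕ) (t : ZMod Nθ),
      (∀ j : ℕ, j < w → t ≠ (j : ZMod Nθ)) → k i t = 0) :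
    ∀ (n : ℕ) (f g : ZMod Nθ → ℝ) (s : ZMod Nθ),
      (∀ j : ℕ, j ≤ n * (w - 1) → f (s - (j : ZMod Nθ)) = g (s - (j : ZMod Nθ))) →
      convLayers Nθ k n f s = convLayers Nθ k n g s := by
  intro n
  induction n with
  | zero =>
      intro f g s h
      have := h 0 (by simp)
      simpa [convLayers] using this
  | succ n ih =>
      intro f g s h
      show (∑ θ : ZMod Nθ, k n (s - θ) * convLayers Nθ k n f θ)
          = ∑ θ : ZMod Nθ, k n (s - θ) * convLayers Nθ k n g θ
      apply Finset.sum_congr rfl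
      intro θ _
      by_cases hk : ∃ j : ℕ, j < w ∧ s - θ = (j : ZMod Nθ)
      · obtain ⟨j, hjw, hj⟩ := hk
        have hθ : θ = s - (j : ZMod Nθ) := by
          rw [← hj, sub_sub_cancel]
        rw [hθ]
        congr 1
        apply ih
        intro j' hj'
        have hcast : (s - (j : ZMod Nθ)) - (j' : ZMod Nθ) = s - ((j + j' : ℕ) : ZMod Nθ) := by
          push_cast
          ring
        rw [hcast]
        apply h
        have hjw1 : j ≤ w - 1 := by omega
        calc j + j' ≤ (w - 1) + n * (w - 1) := by omega
          _ = (n + 1) * (w - 1) := by ring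
      · have : k n (s - θ) = 0 := by
          apply hsupp
          intro j hjw hne
          exact hk ⟨j, hjw, hne⟩
        simp [this]

theorem receptive_field_of_composed_convolutions
    (w Ncnn Nθ : ℕ) [NeZero Nθ] (hw : 0 < w) (hcnn : 0 < Ncnn) (hwN : w < Nθ)
    (k : ℕ → ZMod Nθ → ℝ)
    (hsupp : ∀ (i : ℕ) (t : ZMod Nθ),
      (∀ j : ℕ, j < w → t ≠ (j : ZMod Nθ)) → k i t = 0) :
    (∀ (f g : ZMod Nθ → ℝ) (s : ZMod Nθ),
        (∀ j : ℕ, j ≤ Ncnn * (w - 1) → f (s - (j : ZMod Nθ)) = g (s - (j : ZMod Nθ))) →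
        convLayers Nθ k Ncnn f s = convLayers Nθ k Ncnn g s) ∧
    (Ncnn * (w - 1) < Nθ - 1 →
      ∃ (s θ : ZMod Nθ), ∀ (f : ZMod Nθ → ℝ) (c : ℝ),
        convLayers Nθ k Ncnn (Function.update f θ c) s = convLayers Nθ k Ncnn f s) := by
  constructor
  · exact convLayers_receptive w Nθ k hsupp Ncnn
  · intro hlt
    set M := Ncnn * (w - 1) with hM
    refine ⟨0, -((M + 1 : ℕ) : ZMod Nθ), ?_⟩
    intro f c
    apply convLayers_receptive w Nθ k hsupp Ncnn
    intro j hj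
    apply Function.update_of_ne
    intro hEq
    -- 0 - j = -(M+1) implies (j : ZMod Nθ) = (M+1 : ZMod Nθ)
    have h1 : (j : ZMod Nθ) = ((M + 1 : ℕ) : ZMod Nθ) := by
      have := hEq
      rwa [zero_sub, neg_inj] at this
    have hNθ : 1 < Nθ := by omega
    have hjlt : j < Nθ := by omega
    have hMlt : M + 1 < Nθ := by omega
    have := ZMod.val_cast_of_lt hjlt
    have h2 := ZMod.val_cast_of_lt hMlt
    rw [h1] at this
    omega
end
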